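/- If the complete graph K_v can be decomposed into h edge-disjoint triangles (K_3's), then the digraph obtained by duplicating each vertex i into two non-adjacent copies i_A, i_B, ordered 1_A < 2_A < … < v_A < 1_B < … < v_B around a cycle of 2v positions, admits a partition into h oriented K_{2,2,2}'s each of which loads every arc of the directed cycle C⃗_{2v} at most 3 times (load induced by clockwise shortest-path routing). -/

import Mathlib

def cload (p : ℕ) (S : Finset (ZMod p × ZMod p)) (t : ZMod p) : ℕ :=
  (S.filter fun a => (t - a.1).val < (a.2 - a.1).val).card

def verts (p : ℕ) (S : Finset (ZMod p × ZMod p)) : Finset (ZMod p) :=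
  S.image Prod.fst ∪ S.image Prod.snd

namespace Aux

def nblk (v a b c : ℕ) : Finset (ℕ × ℕ) :=
  {(a,b),(b,c),(a,c),(a+v,b+v),(b+v,c+v),(a+v,c+v),(b,a+v),(c,a+v),(c,b+v),(b+v,a),(c+v,a),(c+v,b)}

def blk (v a b c : ℕ) : Finset (ZMod (2*v) × ZMod (2*v)) :=
  (nblk v a b c).image (fun pr => ((pr.1 : ZMod (2*v)), (pr.2 : ZMod (2*v))))

def P (v : ℕ) (e : ZMod (2*v) × ZMod (2*v)) : ℕ × ℕ :=
  if e.1.val < v then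
    (if e.2.val < v then (e.1.val, e.2.val) else (e.2.val - v, e.1.val))
  else
    (if e.2.val < v then (e.2.val, e.1.val - v) else (e.1.val - v, e.2.val - v))

lemma val_sub' {p : ℕ} [NeZero p] (x y : ZMod p) :
    (x - y).val = if y.val ≤ x.val then x.val - y.val else x.val + p - y.val := by
  have h := ZMod.val_add (x - y) y
  rw [sub_add_cancel] at h
  have h1 := ZMod.val_lt (x - y)
  have h2 := ZMod.val_lt y
  have h3 := ZMod.val_lt x
  rcases Nat.lt_or_ge ((x - y).val + y.val) p with hlt | hge
  · rw [Nat.mod_eq_of_lt hlt] at h; split_ifs <;> omega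
  · rw [Nat.mod_eq_sub_mod hge, Nat.mod_eq_of_lt (by omega)] at h
    split_ifs <;> omega

lemma cond_iff {v : ℕ} (hv : 0 < v) (x y : ℕ) (hx : x < 2*v) (hy : y < 2*v) (t : ZMod (2*v)) :
    ((t - (x : ZMod (2*v))).val < ((y : ZMod (2*v)) - (x : ZMod (2*v))).val) ↔
    ((x ≤ t.val ∧ x ≤ y ∧ t.val < y) ∨ (x ≤ t.val ∧ y < x) ∨ (t.val < x ∧ y < x ∧ t.val < y)) := by
  haveI : NeZero (2*v) := ⟨by omega⟩
  have h1 := ZMod.val_lt t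
  rw [val_sub', val_sub', ZMod.val_natCast_of_lt hx, ZMod.val_natCast_of_lt hy]
  split_ifs <;> omega

lemma card3 {α : Type*} [DecidableEq α] (x y z : α) : ({x, y, z} : Finset α).card ≤ 3 := by
  apply le_trans (Finset.card_insert_le _ _)
  apply Nat.succ_le_succ
  apply le_trans (Finset.card_insert_le _ _)
  simp

set_option maxHeartbeats 2000000 in
lemma load_le (v a b c : ℕ) (hv : 0 < v) (hab : a < b) (hbc : b < c) (hcv : c < v)
    (t : ZMod (2*v)) : cload (2*v) (blk v a b c) t ≤ 3 := by
  haveI : NeZero (2*v) := ⟨by omega⟩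
  have ht : t.val < 2*v := ZMod.val_lt t
  have hstep : cload (2*v) (blk v a b c) t ≤
      ((nblk v a b c).filter (fun pr =>
        (t - (pr.1 : ZMod (2*v))).val < ((pr.2 : ZMod (2*v)) - (pr.1 : ZMod (2*v))).val)).card := by
    unfold cload blk
    rw [Finset.filter_image]
    exact Finset.card_image_le
  refine hstep.trans ?_
  rcases (by omega : (a ≤ t.val ∧ t.val < b) ∨ (b ≤ t.val ∧ t.val < c) ∨
      (c ≤ t.val ∧ t.val < a+v) ∨ (a+v ≤ t.val ∧ t.val < b+v) ∨
      (b+v ≤ t.val ∧ t.val < c+v) ∨ (t.val < a ∨ c+v ≤ t.val)) with g|g|g|g|g|g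
  · refine le_trans (Finset.card_le_card
      (show _ ⊆ ({(a,b),(a,c),(c+v,b)} : Finset (ℕ×ℕ)) from ?_)) (card3 _ _ _)
    intro pr hpr
    rw [Finset.mem_filter] at hpr
    obtain ⟨hm, hc⟩ := hpr
    simp only [nblk, Finset.mem_insert, Finset.mem_singleton] at hm
    rcases hm with rfl|rfl|rfl|rfl|rfl|rfl|rfl|rfl|rfl|rfl|rfl|rfl <;>
      rw [cond_iff hv _ _ (by omega) (by omega) t] at hc <;> dsimp only at hc <;>
      simp only [Finset.mem_insert, Finset.mem_singleton, Prod.mk.injEq, eq_self_iff_true, true_and, and_true, true_or, or_true] <;> first | exact trivial | exact Or.inl trivial | exact Or.inr (Or.inl trivial) | exact Or.inr (Or.inr trivial) | omega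
  · refine le_trans (Finset.card_le_card
      (show _ ⊆ ({(b,c),(a,c),(b,a+v)} : Finset (ℕ×ℕ)) from ?_)) (card3 _ _ _)
    intro pr hpr
    rw [Finset.mem_filter] at hpr
    obtain ⟨hm, hc⟩ := hpr
    simp only [nblk, Finset.mem_insert, Finset.mem_singleton] at hm
    rcases hm with rfl|rfl|rfl|rfl|rfl|rfl|rfl|rfl|rfl|rfl|rfl|rfl <;>
      rw [cond_iff hv _ _ (by omega) (by omega) t] at hc <;> dsimp only at hc <;>
      simp only [Finset.mem_insert, Finset.mem_singleton, Prod.mk.injEq, eq_self_iff_true, true_and, and_true, true_or, or_true] <;> first | exact trivial | exact Or.inl trivial | exact Or.inr (Or.inl trivial) | exact Or.inr (Or.inr trivial) | omega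
  · refine le_trans (Finset.card_le_card
      (show _ ⊆ ({(b,a+v),(c,a+v),(c,b+v)} : Finset (ℕ×ℕ)) from ?_)) (card3 _ _ _)
    intro pr hpr
    rw [Finset.mem_filter] at hpr
    obtain ⟨hm, hc⟩ := hpr
    simp only [nblk, Finset.mem_insert, Finset.mem_singleton] at hm
    rcases hm with rfl|rfl|rfl|rfl|rfl|rfl|rfl|rfl|rfl|rfl|rfl|rfl <;>
      rw [cond_iff hv _ _ (by omega) (by omega) t] at hc <;> dsimp only at hc <;>
      simp only [Finset.mem_insert, Finset.mem_singleton, Prod.mk.injEq, eq_self_iff_true, true_and, and_true, true_or, or_true] <;> first | exact trivial | exact Or.inl trivial | exact Or.inr (Or.inl trivial) | exact Or.inr (Or.inr trivial) | omega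
  · refine le_trans (Finset.card_le_card
      (show _ ⊆ ({(a+v,b+v),(a+v,c+v),(c,b+v)} : Finset (ℕ×ℕ)) from ?_)) (card3 _ _ _)
    intro pr hpr
    rw [Finset.mem_filter] at hpr
    obtain ⟨hm, hc⟩ := hpr
    simp only [nblk, Finset.mem_insert, Finset.mem_singleton] at hm
    rcases hm with rfl|rfl|rfl|rfl|rfl|rfl|rfl|rfl|rfl|rfl|rfl|rfl <;>
      rw [cond_iff hv _ _ (by omega) (by omega) t] at hc <;> dsimp only at hc <;>
      simp only [Finset.mem_insert, Finset.mem_singleton, Prod.mk.injEq, eq_self_iff_true, true_and, and_true, true_or, or_true] <;> first | exact trivial | exact Or.inl trivial | exact Or.inr (Or.inl trivial) | exact Or.inr (Or.inr trivial) | omega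
  · refine le_trans (Finset.card_le_card
      (show _ ⊆ ({(b+v,c+v),(a+v,c+v),(b+v,a)} : Finset (ℕ×ℕ)) from ?_)) (card3 _ _ _)
    intro pr hpr
    rw [Finset.mem_filter] at hpr
    obtain ⟨hm, hc⟩ := hpr
    simp only [nblk, Finset.mem_insert, Finset.mem_singleton] at hm
    rcases hm with rfl|rfl|rfl|rfl|rfl|rfl|rfl|rfl|rfl|rfl|rfl|rfl <;>
      rw [cond_iff hv _ _ (by omega) (by omega) t] at hc <;> dsimp only at hc <;>
      simp only [Finset.mem_insert, Finset.mem_singleton, Prod.mk.injEq, eq_self_iff_true, true_and, and_true, true_or, or_true] <;> first | exact trivial | exact Or.inl trivial | exact Or.inr (Or.inl trivial) | exact Or.inr (Or.inr trivial) | omega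
  · refine le_trans (Finset.card_le_card
      (show _ ⊆ ({(b+v,a),(c+v,a),(c+v,b)} : Finset (ℕ×ℕ)) from ?_)) (card3 _ _ _)
    intro pr hpr
    rw [Finset.mem_filter] at hpr
    obtain ⟨hm, hc⟩ := hpr
    simp only [nblk, Finset.mem_insert, Finset.mem_singleton] at hm
    rcases hm with rfl|rfl|rfl|rfl|rfl|rfl|rfl|rfl|rfl|rfl|rfl|rfl <;>
      rw [cond_iff hv _ _ (by omega) (by omega) t] at hc <;> dsimp only at hc <;>
      simp only [Finset.mem_insert, Finset.mem_singleton, Prod.mk.injEq, eq_self_iff_true, true_and, and_true, true_or, or_true] <;> first | exact trivial | exact Or.inl trivial | exact Or.inr (Or.inl trivial) | exact Or.inr (Or.inr trivial) | omega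

lemma P_blk {v a b c : ℕ} (hv : 0 < v) (hab : a < b) (hbc : b < c) (hcv : c < v) {e}
    (he : e ∈ blk v a b c) : P v e = (a, b) ∨ P v e = (a, c) ∨ P v e = (b, c) := by
  haveI : NeZero (2*v) := ⟨by omega⟩
  have hval : ∀ n : ℕ, n < 2*v → ((n : ZMod (2*v))).val = n := fun n h => ZMod.val_natCast_of_lt h
  rw [blk, Finset.mem_image] at he
  obtain ⟨pr, hpr, rfl⟩ := he
  simp only [nblk, Finset.mem_insert, Finset.mem_singleton] at hpr
  rcases hpr with rfl|rfl|rfl|rfl|rfl|rfl|rfl|rfl|rfl|rfl|rfl|rfl <;>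
    · dsimp only [P]
      rw [hval _ (by omega), hval _ (by omega)]
      split_ifs <;> simp only [Prod.mk.injEq, eq_self_iff_true, true_and, and_true, true_or, or_true] <;> first | exact trivial | exact Or.inl trivial | exact Or.inr (Or.inl trivial) | exact Or.inr (Or.inr trivial) | omega

lemma cast_inj_of_lt {v : ℕ} (hv : 0 < v) {x y : ℕ} (hx : x < 2*v) (hy : y < 2*v)
    (h : (x : ZMod (2*v)) = y) : x = y := by
  haveI : NeZero (2*v) := ⟨by omega⟩
  rw [← ZMod.val_natCast_of_lt hx, ← ZMod.val_natCast_of_lt hy, h]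

lemma nblk_bounds {v a b c : ℕ} (hab : a < b) (hbc : b < c) (hcv : c < v) :
    ∀ pr ∈ nblk v a b c, pr.1 < 2*v ∧ pr.2 < 2*v := by
  intro pr hpr
  simp only [nblk, Finset.mem_insert, Finset.mem_singleton] at hpr
  rcases hpr with rfl|rfl|rfl|rfl|rfl|rfl|rfl|rfl|rfl|rfl|rfl|rfl <;> dsimp only <;> omega

lemma nblk_card {v a b c : ℕ} (hab : a < b) (hbc : b < c) (hcv : c < v) :
    (nblk v a b c).card = 12 := by
  rw [nblk]
  repeat rw [Finset.card_insert_of_notMem (by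
    simp only [Finset.mem_insert, Finset.mem_singleton, Prod.mk.injEq]; omega)]
  rfl

lemma blk_card {v a b c : ℕ} (hv : 0 < v) (hab : a < b) (hbc : b < c) (hcv : c < v) :
    (blk v a b c).card = 12 := by
  rw [blk, Finset.card_image_of_injOn, nblk_card hab hbc hcv]
  intro p1 h1 p2 h2 he
  obtain ⟨e1, e2⟩ := nblk_bounds hab hbc hcv p1 h1
  obtain ⟨e3, e4⟩ := nblk_bounds hab hbc hcv p2 h2
  rw [Prod.ext_iff] at he ⊢
  obtain ⟨ha1, ha2⟩ := he
  exact ⟨cast_inj_of_lt hv e1 e3 ha1, cast_inj_of_lt hv e2 e4 ha2⟩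

lemma verts_blk {v a b c : ℕ} (hv : 0 < v) (hab : a < b) (hbc : b < c) (hcv : c < v) :
    (verts (2*v) (blk v a b c)).card = 6 := by
  haveI : NeZero (2*v) := ⟨by omega⟩
  have hs : verts (2*v) (blk v a b c) =
      ({a, b, c, a+v, b+v, c+v} : Finset ℕ).image (fun n : ℕ => (n : ZMod (2*v))) := by
    rw [verts, blk]
    ext z
    simp only [Finset.mem_union, Finset.mem_image, Finset.mem_insert, Finset.mem_singleton, nblk]
    constructor
    · rintro (⟨e, ⟨pr, hpr, rfl⟩, rfl⟩ | ⟨e, ⟨pr, hpr, rfl⟩, rfl⟩) <;>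
        rcases hpr with rfl|rfl|rfl|rfl|rfl|rfl|rfl|rfl|rfl|rfl|rfl|rfl <;>
        exact ⟨_, by simp, rfl⟩
    · rintro ⟨n, hn, rfl⟩
      rcases hn with h|h|h|h|h|h <;> rw [h]
      exacts [Or.inl ⟨_, ⟨(a,b), by simp, rfl⟩, rfl⟩,
        Or.inl ⟨_, ⟨(b,c), by simp, rfl⟩, rfl⟩,
        Or.inl ⟨_, ⟨(c,a+v), by simp, rfl⟩, rfl⟩,
        Or.inl ⟨_, ⟨(a+v,b+v), by simp, rfl⟩, rfl⟩,
        Or.inl ⟨_, ⟨(b+v,c+v), by simp, rfl⟩, rfl⟩,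
        Or.inl ⟨_, ⟨(c+v,a), by simp, rfl⟩, rfl⟩]
  rw [hs, Finset.card_image_of_injOn]
  · rw [Finset.card_insert_of_notMem (by
        simp only [Finset.mem_insert, Finset.mem_singleton]; omega),
      Finset.card_insert_of_notMem (by
        simp only [Finset.mem_insert, Finset.mem_singleton]; omega),
      Finset.card_insert_of_notMem (by
        simp only [Finset.mem_insert, Finset.mem_singleton]; omega),
      Finset.card_insert_of_notMem (by
        simp only [Finset.mem_insert, Finset.mem_singleton]; omega),
      Finset.card_insert_of_notMem (by
        simp only [Finset.mem_singleton]; omega),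
      Finset.card_singleton]
  · intro x hx y hy hxy
    simp only [Finset.coe_insert, Set.mem_insert_iff, Finset.coe_singleton, Set.mem_singleton_iff] at hx hy
    exact cast_inj_of_lt hv (by omega) (by omega) hxy

lemma three_sorted {v : ℕ} (s : Finset (Fin v)) (h : s.card = 3) :
    ∃ a b c : Fin v, a < b ∧ b < c ∧ s = {a, b, c} := by
  obtain ⟨x, y, z, hxy, hxz, hyz, rfl⟩ := Finset.card_eq_three.1 h
  rcases lt_or_gt_of_ne hxy with h1|h1 <;> rcases lt_or_gt_of_ne hxz with h2|h2 <;>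
    rcases lt_or_gt_of_ne hyz with h3|h3
  · exact ⟨x, y, z, h1, h3, rfl⟩
  · exact ⟨x, z, y, h2, h3, by ext t; simp; tauto⟩
  · exact absurd (h2.trans (h1.trans h3)) (lt_irrefl _)
  · exact ⟨z, x, y, h2, h1, by ext t; simp; tauto⟩
  · exact ⟨y, x, z, h1, h2, by ext t; simp; tauto⟩
  · exact absurd (h3.trans (h1.trans h2)) (lt_irrefl _)
  · exact ⟨y, z, x, h3, h2, by ext t; simp; tauto⟩
  · exact ⟨z, y, x, h3, h1, by ext t; simp; tauto⟩
end Aux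

set_option maxHeartbeats 4000000 in
theorem stmt_15 (v h : ℕ) (hv : 1 ≤ v)
    -- a decomposition of `K_v` into `h` edge-disjoint triangles
    (tri : Fin h → Finset (Fin v))
    (htri : ∀ w, (tri w).card = 3)
    (hdecomp : ∀ i j : Fin v, i ≠ j → ∃! w, i ∈ tri w ∧ j ∈ tri w) :
    -- there is a partition into `h` oriented `K_{2,2,2}`'s (6 vertices, 12 arcs each),
    -- each loading every arc of `C⃗_{2v}` at most 3 times, whose union is the digraph
    -- obtained from `K_v` by duplicating each vertex `i` into copies `i` and `i + v`.
    ∃ B : Fin h → Finset (ZMod (2 * v) × ZMod (2 * v)),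
      (∀ w w', w ≠ w' → Disjoint (B w) (B w')) ∧
      (∀ w, (B w).card = 12) ∧
      (∀ w, (verts (2 * v) (B w)).card = 6) ∧
      (∀ w, ∀ t : ZMod (2 * v), cload (2 * v) (B w) t ≤ 3) ∧
      (∀ a : ZMod (2 * v) × ZMod (2 * v),
        (∃ w, a ∈ B w) ↔
          ∃ i j : Fin v, (i : ℕ) < (j : ℕ) ∧
            (a = (((i : ℕ) : ZMod (2 * v)), ((j : ℕ) : ZMod (2 * v))) ∨
             a = ((((i : ℕ) + v : ℕ) : ZMod (2 * v)), (((j : ℕ) + v : ℕ) : ZMod (2 * v))) ∨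
             a = (((j : ℕ) : ZMod (2 * v)), (((i : ℕ) + v : ℕ) : ZMod (2 * v))) ∨
             a = ((((j : ℕ) + v : ℕ) : ZMod (2 * v)), ((i : ℕ) : ZMod (2 * v))))) := by
  classical
  haveI : NeZero (2 * v) := ⟨by omega⟩
  choose A2 B2 C2 hAB hBC heq using fun w => Aux.three_sorted (tri w) (htri w)
  have hABn : ∀ w, (A2 w : ℕ) < (B2 w : ℕ) := fun w => hAB w
  have hBCn : ∀ w, (B2 w : ℕ) < (C2 w : ℕ) := fun w => hBC w
  have hACn : ∀ w, (A2 w : ℕ) < (C2 w : ℕ) := fun w => lt_trans (hABn w) (hBCn w)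
  have hv0 : 0 < v := hv
  have m1 : ∀ w (e : ZMod (2 * v) × ZMod (2 * v)),
      e ∈ Aux.blk v (A2 w : ℕ) (B2 w : ℕ) (C2 w : ℕ) →
      ∃ i j : Fin v, i ∈ tri w ∧ j ∈ tri w ∧ i < j ∧ ((i : ℕ), (j : ℕ)) = Aux.P v e := by
    intro w e he
    rcases Aux.P_blk hv0 (hABn w) (hBCn w) (C2 w).isLt he with h1|h1|h1
    · exact ⟨A2 w, B2 w, by rw [heq w]; simp, by rw [heq w]; simp, hAB w, h1.symm⟩
    · exact ⟨A2 w, C2 w, by rw [heq w]; simp, by rw [heq w]; simp, lt_trans (hAB w) (hBC w), h1.symm⟩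
    · exact ⟨B2 w, C2 w, by rw [heq w]; simp, by rw [heq w]; simp, hBC w, h1.symm⟩
  refine ⟨fun w => Aux.blk v (A2 w : ℕ) (B2 w : ℕ) (C2 w : ℕ), ?_, ?_, ?_, ?_, ?_⟩
  · intro w w' hne
    rw [Finset.disjoint_left]
    intro e he he'
    obtain ⟨i, j, hi, hj, hij, hp⟩ := m1 w e he
    obtain ⟨i', j', hi', hj', hij', hp'⟩ := m1 w' e he'
    obtain ⟨e1, e2⟩ := Prod.ext_iff.1 (hp.trans hp'.symm)
    have hii : i = i' := Fin.ext e1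
    have hjj : j = j' := Fin.ext e2
    exact hne ((hdecomp i j (ne_of_lt hij)).unique ⟨hi, hj⟩ ⟨hii ▸ hi', hjj ▸ hj'⟩)
  · exact fun w => Aux.blk_card hv0 (hABn w) (hBCn w) (C2 w).isLt
  · exact fun w => Aux.verts_blk hv0 (hABn w) (hBCn w) (C2 w).isLt
  · exact fun w t => Aux.load_le v _ _ _ hv0 (hABn w) (hBCn w) (C2 w).isLt t
  · intro e
    constructor
    · rintro ⟨w, he⟩
      have he' : e ∈ Aux.blk v (A2 w : ℕ) (B2 w : ℕ) (C2 w : ℕ) := he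
      rw [Aux.blk, Finset.mem_image] at he'
      obtain ⟨pr, hpr, rfl⟩ := he'
      simp only [Aux.nblk, Finset.mem_insert, Finset.mem_singleton] at hpr
      rcases hpr with rfl|rfl|rfl|rfl|rfl|rfl|rfl|rfl|rfl|rfl|rfl|rfl
      exacts [⟨A2 w, B2 w, hABn w, Or.inl rfl⟩,
        ⟨B2 w, C2 w, hBCn w, Or.inl rfl⟩,
        ⟨A2 w, C2 w, hACn w, Or.inl rfl⟩,
        ⟨A2 w, B2 w, hABn w, Or.inr (Or.inl rfl)⟩,
        ⟨B2 w, C2 w, hBCn w, Or.inr (Or.inl rfl)⟩,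
        ⟨A2 w, C2 w, hACn w, Or.inr (Or.inl rfl)⟩,
        ⟨A2 w, B2 w, hABn w, Or.inr (Or.inr (Or.inl rfl))⟩,
        ⟨A2 w, C2 w, hACn w, Or.inr (Or.inr (Or.inl rfl))⟩,
        ⟨B2 w, C2 w, hBCn w, Or.inr (Or.inr (Or.inl rfl))⟩,
        ⟨A2 w, B2 w, hABn w, Or.inr (Or.inr (Or.inr rfl))⟩,
        ⟨A2 w, C2 w, hACn w, Or.inr (Or.inr (Or.inr rfl))⟩,
        ⟨B2 w, C2 w, hBCn w, Or.inr (Or.inr (Or.inr rfl))⟩]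
    · rintro ⟨i, j, hij, hforms⟩
      have hne : i ≠ j := by
        intro hh; rw [hh] at hij; omega
      obtain ⟨w, ⟨hiw, hjw⟩, -⟩ := hdecomp i j hne
      refine ⟨w, ?_⟩
      rw [heq w] at hiw hjw
      simp only [Finset.mem_insert, Finset.mem_singleton] at hiw hjw
      have hiv : (i : ℕ) = (A2 w : ℕ) ∨ (i : ℕ) = (B2 w : ℕ) ∨ (i : ℕ) = (C2 w : ℕ) := by
        rcases hiw with rfl|rfl|rfl <;> simp
      have hjv : (j : ℕ) = (A2 w : ℕ) ∨ (j : ℕ) = (B2 w : ℕ) ∨ (j : ℕ) = (C2 w : ℕ) := by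
        rcases hjw with rfl|rfl|rfl <;> simp
      have hab := hABn w
      have hbc := hBCn w
      have hc3 : ((i : ℕ) = (A2 w : ℕ) ∧ (j : ℕ) = (B2 w : ℕ)) ∨
          ((i : ℕ) = (A2 w : ℕ) ∧ (j : ℕ) = (C2 w : ℕ)) ∨
          ((i : ℕ) = (B2 w : ℕ) ∧ (j : ℕ) = (C2 w : ℕ)) := by omega
      rcases hforms with rfl|rfl|rfl|rfl <;>
        refine (?_ : _ ∈ Aux.blk v (A2 w : ℕ) (B2 w : ℕ) (C2 w : ℕ)) <;>
        rw [Aux.blk, Finset.mem_image] <;>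
        rcases hc3 with ⟨h1, h2⟩|⟨h1, h2⟩|⟨h1, h2⟩ <;> rw [h1, h2]
      exacts [⟨((A2 w : ℕ), (B2 w : ℕ)), by simp [Aux.nblk], rfl⟩,
              ⟨((A2 w : ℕ), (C2 w : ℕ)), by simp [Aux.nblk], rfl⟩,
              ⟨((B2 w : ℕ), (C2 w : ℕ)), by simp [Aux.nblk], rfl⟩,
              ⟨((A2 w : ℕ) + v, (B2 w : ℕ) + v), by simp [Aux.nblk], rfl⟩,
              ⟨((A2 w : ℕ) + v, (C2 w : ℕ) + v), by simp [Aux.nblk], rfl⟩,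
              ⟨((B2 w : ℕ) + v, (C2 w : ℕ) + v), by simp [Aux.nblk], rfl⟩,
              ⟨((B2 w : ℕ), (A2 w : ℕ) + v), by simp [Aux.nblk], rfl⟩,
              ⟨((C2 w : ℕ), (A2 w : ℕ) + v), by simp [Aux.nblk], rfl⟩,
              ⟨((C2 w : ℕ), (B2 w : ℕ) + v), by simp [Aux.nblk], rfl⟩,
              ⟨((B2 w : ℕ) + v, (A2 w : ℕ)), by simp [Aux.nblk], rfl⟩,
              ⟨((C2 w : ℕ) + v, (A2 w : ℕ)), by simp [Aux.nblk], rfl⟩,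
              ⟨((C2 w : ℕ) + v, (B2 w : ℕ)), by simp [Aux.nblk], rfl⟩]
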